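/- (Content of Lemma 3.5) For all real parameters a > 0, b > 1, T > 0, every even integer n ≥ 2, and every χ ∈ [0, s_n(b,T)], one has G_{a,b,T}(χ) ≤ a·T·b^{n−2}. -/

import Mathlib

open Real Filter Set

/-- Breakpoints `s_n(b,T) = T·π·(b^n − 1)/(b − 1)`. -/
noncomputable def brk (b T : ℝ) (n : ℕ) : ℝ := T * Real.pi * (b ^ n - 1) / (b - 1)

/-- Index of the segment containing `x ≥ 0`: the unique `m` with `s_m ≤ x < s_{m+1}`
(for `b > 1`, `T > 0`). -/
noncomputable def seg (b T x : ℝ) : ℕ := sInf {n : ℕ | x < brk b T (n + 1)}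

/-- The saturated Nussbaum function `N_{a,b,T}`: on `[s_{n−1}, s_n)` (with `m = n − 1`)
it equals `(−1)^m·a·cos((χ − s_m)/(b^m·T))`, extended evenly to `χ < 0`. -/
noncomputable def satN (a b T : ℝ) (χ : ℝ) : ℝ :=
  (-1 : ℝ) ^ (seg b T |χ|) * a *
    Real.cos ((|χ| - brk b T (seg b T |χ|)) / (b ^ (seg b T |χ|) * T))

/-- The integrated function `G_{a,b,T}(χ) = ∫_0^χ N_{a,b,T}(τ) dτ`. -/
noncomputable def satG (a b T : ℝ) (χ : ℝ) : ℝ := ∫ τ in (0:ℝ)..χ, satN a b T τ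

lemma brk_zero (b T : ℝ) : brk b T 0 = 0 := by simp [brk]

lemma brk_succ_sub {b : ℝ} (hb : 1 < b) (T : ℝ) (m : ℕ) :
    brk b T (m + 1) - brk b T m = T * Real.pi * b ^ m := by
  have h : b - 1 ≠ 0 := by linarith
  rw [brk, brk, div_sub_div_same, div_eq_iff h]; ring

lemma brk_lt_succ {b T : ℝ} (hb : 1 < b) (hT : 0 < T) (m : ℕ) :
    brk b T m < brk b T (m + 1) := by
  have h := brk_succ_sub hb T m
  have : 0 < T * Real.pi * b ^ m := by positivity
  linarith

lemma brk_strictMono {b T : ℝ} (hb : 1 < b) (hT : 0 < T) : StrictMono (brk b T) :=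
  strictMono_nat_of_lt_succ (brk_lt_succ hb hT)

lemma brk_nonneg {b T : ℝ} (hb : 1 < b) (hT : 0 < T) (m : ℕ) : 0 ≤ brk b T m := by
  simpa [brk_zero] using (brk_strictMono hb hT).monotone (Nat.zero_le m)

lemma seg_eq {b T : ℝ} (hb : 1 < b) (hT : 0 < T) {m : ℕ} {x : ℝ}
    (h1 : brk b T m ≤ x) (h2 : x < brk b T (m + 1)) : seg b T x = m := by
  have hmem : m ∈ {n : ℕ | x < brk b T (n + 1)} := h2
  refine le_antisymm (Nat.sInf_le hmem) (le_csInf ⟨m, hmem⟩ ?_)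
  intro k hk
  by_contra hlt
  push_neg at hlt
  have : brk b T (k + 1) ≤ brk b T m :=
    (brk_strictMono hb hT).monotone (by omega)
  exact absurd (lt_of_lt_of_le hk this) (not_lt.2 h1)

lemma satN_eq {b T : ℝ} (a : ℝ) (hb : 1 < b) (hT : 0 < T) {m : ℕ} {x : ℝ}
    (h1 : brk b T m ≤ x) (h2 : x ≤ brk b T (m + 1)) :
    satN a b T x = (-1 : ℝ) ^ m * a * Real.cos ((x - brk b T m) / (b ^ m * T)) := by
  have hx0 : 0 ≤ x := le_trans (brk_nonneg hb hT m) h1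
  have habs : |x| = x := abs_of_nonneg hx0
  rcases lt_or_eq_of_le h2 with h2' | h2'
  · rw [satN, habs, seg_eq hb hT h1 h2']
  · have hseg : seg b T x = m + 1 := by
      refine seg_eq hb hT (le_of_eq h2'.symm) ?_
      rw [h2']; exact brk_lt_succ hb hT (m + 1)
    rw [satN, habs, hseg, h2']
    have hb0 : (0:ℝ) < b ^ m := by positivity
    have hbm1 : (0:ℝ) < b ^ (m+1) := by positivity
    rw [sub_self, zero_div, Real.cos_zero, brk_succ_sub hb T m]
    have : T * Real.pi * b ^ m / (b ^ m * T) = Real.pi := by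
      field_simp
    rw [this, Real.cos_pi]
    ring

lemma hasDerivAt_F {b T : ℝ} (a : ℝ) (hb : 1 < b) (hT : 0 < T) (m : ℕ) (x : ℝ) :
    HasDerivAt (fun χ => (-1 : ℝ) ^ m * a * (b ^ m * T) *
        Real.sin ((χ - brk b T m) / (b ^ m * T)))
      ((-1 : ℝ) ^ m * a * Real.cos ((x - brk b T m) / (b ^ m * T))) x := by
  have hd : (0:ℝ) < b ^ m * T := by positivity
  have h1 : HasDerivAt (fun χ : ℝ => (χ - brk b T m) / (b ^ m * T)) (1 / (b ^ m * T)) x := by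
    simpa using ((hasDerivAt_id x).sub_const (brk b T m)).div_const (b ^ m * T)
  have h2 := (Real.hasDerivAt_sin ((x - brk b T m) / (b ^ m * T))).comp x h1
  have h3 := h2.const_mul ((-1 : ℝ) ^ m * a * (b ^ m * T))
  refine h3.congr_deriv ?_
  field_simp

lemma intervalIntegrable_satN {b T : ℝ} (a : ℝ) (hb : 1 < b) (hT : 0 < T) {m : ℕ} {x y : ℝ}
    (hx : brk b T m ≤ x) (hy : y ≤ brk b T (m + 1)) (hxy : x ≤ y) :
    IntervalIntegrable (satN a b T) MeasureTheory.volume x y := by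
  have hcont : Continuous (fun χ : ℝ => (-1 : ℝ) ^ m * a *
      Real.cos ((χ - brk b T m) / (b ^ m * T))) := by fun_prop
  refine (hcont.intervalIntegrable x y).congr_ae ?_
  refine (MeasureTheory.ae_restrict_iff' measurableSet_uIoc).2 ?_
  filter_upwards with τ hτ
  rw [Set.uIoc_of_le hxy] at hτ
  exact (satN_eq a hb hT (le_trans hx hτ.1.le) (le_trans hτ.2 hy)).symm

lemma integral_seg {b T : ℝ} (a : ℝ) (hb : 1 < b) (hT : 0 < T) {m : ℕ} {χ : ℝ}
    (h1 : brk b T m ≤ χ) (h2 : χ ≤ brk b T (m + 1)) :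
    ∫ τ in (brk b T m)..χ, satN a b T τ =
      (-1 : ℝ) ^ m * a * (b ^ m * T) * Real.sin ((χ - brk b T m) / (b ^ m * T)) := by
  have heq : Set.EqOn (satN a b T)
      (fun τ => (-1 : ℝ) ^ m * a * Real.cos ((τ - brk b T m) / (b ^ m * T)))
      (Set.uIcc (brk b T m) χ) := by
    intro τ hτ
    rw [Set.uIcc_of_le h1] at hτ
    exact satN_eq a hb hT hτ.1 (le_trans hτ.2 h2)
  rw [intervalIntegral.integral_congr heq]
  have hcont : Continuous (fun τ : ℝ => (-1 : ℝ) ^ m * a *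
      Real.cos ((τ - brk b T m) / (b ^ m * T))) := by fun_prop
  rw [intervalIntegral.integral_eq_sub_of_hasDerivAt
    (fun x _ => hasDerivAt_F a hb hT m x) (hcont.intervalIntegrable _ _)]
  simp

lemma intervalIntegrable_satN_zero {b T : ℝ} (a : ℝ) (hb : 1 < b) (hT : 0 < T) (m : ℕ) :
    IntervalIntegrable (satN a b T) MeasureTheory.volume 0 (brk b T m) := by
  induction m with
  | zero => rw [brk_zero]
  | succ k ih =>
      exact ih.trans (intervalIntegrable_satN a hb hT le_rfl le_rfl
        (brk_lt_succ hb hT k).le)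

lemma satG_brk {b T : ℝ} (a : ℝ) (hb : 1 < b) (hT : 0 < T) (m : ℕ) :
    satG a b T (brk b T m) = 0 := by
  induction m with
  | zero => simp [satG, brk_zero]
  | succ k ih =>
      have hadd := intervalIntegral.integral_add_adjacent_intervals
        (intervalIntegrable_satN_zero a hb hT k)
        (intervalIntegrable_satN a hb hT le_rfl le_rfl (brk_lt_succ hb hT k).le)
      rw [satG, ← hadd, integral_seg a hb hT (brk_lt_succ hb hT k).le le_rfl]
      rw [brk_succ_sub hb T k]
      have hd : (0:ℝ) < b ^ k * T := by positivity
      have : T * Real.pi * b ^ k / (b ^ k * T) = Real.pi := by field_simp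
      rw [this, Real.sin_pi]
      rw [satG] at ih
      rw [ih]; ring

/-- content of Lemma 3.5: for even `n ≥ 2` and `χ ∈ [0, s_n]`,
`G_{a,b,T}(χ) ≤ a·T·b^{n−2}`. -/
theorem satG_upper_bound_even (a b T : ℝ) (ha : 0 < a) (hb : 1 < b) (hT : 0 < T)
    (n : ℕ) (hn : 2 ≤ n) (hne : Even n) (χ : ℝ)
    (hχ : χ ∈ Set.Icc (0 : ℝ) (brk b T n)) :
    satG a b T χ ≤ a * T * b ^ (n - 2) := by
  obtain ⟨hχ0, hχn⟩ := hχ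
  have hpos : (0:ℝ) < a * T * b ^ (n - 2) := by positivity
  set m := seg b T χ with hm
  have hnmem : n ∈ {k : ℕ | χ < brk b T (k + 1)} :=
    lt_of_le_of_lt hχn (brk_lt_succ hb hT n)
  have hmem : χ < brk b T (m + 1) := Nat.sInf_mem (⟨n, hnmem⟩ : Set.Nonempty _)
  have hmn : m ≤ n := Nat.sInf_le hnmem
  have hlow : brk b T m ≤ χ := by
    rcases Nat.eq_zero_or_pos m with h0 | h0
    · rw [h0, brk_zero]; exact hχ0
    · by_contra hlt
      push_neg at hlt
      have hm1 : m - 1 + 1 = m := by omega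
      have : m ≤ m - 1 := Nat.sInf_le (show χ < brk b T (m - 1 + 1) by rwa [hm1])
      omega
  rcases eq_or_lt_of_le hmn with heq | hlt
  · -- χ = brk n
    have : χ = brk b T n := le_antisymm hχn (by rw [← heq]; exact hlow)
    rw [this, satG_brk a hb hT n]
    exact hpos.le
  · -- m < n
    have hG : satG a b T χ =
        (-1 : ℝ) ^ m * a * (b ^ m * T) * Real.sin ((χ - brk b T m) / (b ^ m * T)) := by
      have hadd := intervalIntegral.integral_add_adjacent_intervals
        (intervalIntegrable_satN_zero a hb hT m)
        (intervalIntegrable_satN a hb hT le_rfl hmem.le hlow)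
      rw [satG, ← hadd, integral_seg a hb hT hlow hmem.le]
      have h0 := satG_brk a hb hT m
      rw [satG] at h0
      rw [h0]; ring
    rw [hG]
    have hd : (0:ℝ) < b ^ m * T := by positivity
    set θ := (χ - brk b T m) / (b ^ m * T) with hθ
    have hθ0 : 0 ≤ θ := div_nonneg (by linarith) hd.le
    have hθπ : θ ≤ Real.pi := by
      rw [hθ, div_le_iff₀ hd]
      have h2 : χ - brk b T m ≤ T * Real.pi * b ^ m := by
        have := brk_succ_sub hb T m
        linarith [hmem.le]
      have h3 : T * Real.pi * b ^ m = Real.pi * (b ^ m * T) := by ring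
      linarith
    have hs0 : 0 ≤ Real.sin θ := Real.sin_nonneg_of_nonneg_of_le_pi hθ0 hθπ
    have hs1 : Real.sin θ ≤ 1 := Real.sin_le_one θ
    have hbm0 : (0:ℝ) < b ^ m := by positivity
    rcases Nat.even_or_odd m with he | ho
    · rw [he.neg_one_pow]
      have hmn2 : m ≤ n - 2 := by
        have h1 := Nat.even_iff.1 he
        have h2 := Nat.even_iff.1 hne
        omega
      have hbm : b ^ m ≤ b ^ (n - 2) := pow_le_pow_right₀ hb.le hmn2
      have hstep : a * (b ^ m * T) * Real.sin θ ≤ a * (b ^ m * T) :=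
        mul_le_of_le_one_right (by positivity) hs1
      have hstep2 : a * (b ^ m * T) ≤ a * T * b ^ (n - 2) := by nlinarith
      nlinarith
    · rw [ho.neg_one_pow]
      have hnn : 0 ≤ a * (b ^ m * T) * Real.sin θ := by positivity
      nlinarith
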